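/- Let U be a unipotent algebraic group over a field F of characteristic zero, and let φ : U → U be an algebraic group automorphism such that the induced map on the abelianization U/[U,U] has no eigenvalue 1 (equivalently, id − φ is invertible on each graded piece of the descending central series). Then the Lang map L : U → U, g ↦ g⁻¹φ(g), is bijective on F-points. -/

import Mathlib

section Aux

variable {U : Type*} [Group U]

/-- An automorphism preserves each term of the lower central series. -/
lemma phi_mem_lcs (φ : U ≃* U) {k : ℕ} {u : U} (hu : u ∈ (⊤ : Subgroup U).lowerCentralSeries k) :
    φ u ∈ (⊤ : Subgroup U).lowerCentralSeries k :=
  by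
    have h := Subgroup.map_lowerCentralSeries (⊤ : Subgroup U) (φ : U →* U) k
    rw [Subgroup.map_top_of_surjective _ φ.surjective] at h
    rw [← h]; exact ⟨u, hu, rfl⟩

/-- Commutators of an element of `LCS k` with anything lie in `LCS (k+1)`. -/
lemma comm_mem_lcs_succ {k : ℕ} {a : U} (ha : a ∈ (⊤ : Subgroup U).lowerCentralSeries k) (b : U) :
    a * b * a⁻¹ * b⁻¹ ∈ (⊤ : Subgroup U).lowerCentralSeries (k + 1) := by
  rw [Subgroup.lowerCentralSeries_succ]
  exact Subgroup.commutator_mem_commutator ha (Subgroup.mem_top b)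

end Aux

/-- (Lang's theorem for unipotent groups, abstracted to the
nilpotent group of `F`-points.) Let `U` be a nilpotent group (the points of a
unipotent algebraic group over a field of characteristic zero) and `φ` an
automorphism such that `id − φ` is invertible on each graded piece of the
descending central series (i.e. the induced Lang map on each graded piece is
surjective and injective). Then the Lang map `g ↦ g⁻¹ * φ g` is bijective. -/
theorem lang_map_bijective {U : Type*} [Group U] [Group.IsNilpotent U] (φ : U ≃* U)
    (hsurj : ∀ i : ℕ, ∀ v ∈ (⊤ : Subgroup U).lowerCentralSeries i, ∃ u ∈ (⊤ : Subgroup U).lowerCentralSeries i,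
      (u⁻¹ * φ u) * v⁻¹ ∈ (⊤ : Subgroup U).lowerCentralSeries (i + 1))
    (hinj : ∀ i : ℕ, ∀ u ∈ (⊤ : Subgroup U).lowerCentralSeries i,
      u⁻¹ * φ u ∈ (⊤ : Subgroup U).lowerCentralSeries (i + 1) → u ∈ (⊤ : Subgroup U).lowerCentralSeries (i + 1)) :
    Function.Bijective (fun u : U => u⁻¹ * φ u) := by
  obtain ⟨n, hn⟩ := Subgroup.nilpotent_iff_lowerCentralSeries.mp ‹Group.IsNilpotent U›
  constructor
  · -- injectivity
    intro u u' h
    simp only at h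
    set g := u * u'⁻¹ with hg
    have hφg : φ g = g := by
      have : φ u * (φ u')⁻¹ = u * u'⁻¹ := by
        have h1 : φ u = u * (u⁻¹ * φ u) := by group
        have h2 : φ u' = u' * (u'⁻¹ * φ u') := by group
        rw [h1, h2, ← h]
        group
      simpa [hg] using this
    have key : ∀ k : ℕ, g ∈ (⊤ : Subgroup U).lowerCentralSeries k := by
      intro k
      induction k with
      | zero => exact Subgroup.mem_top g
      | succ k ih =>
        apply hinj k g ih
        rw [hφg]
        simpa using Subgroup.one_mem _
    have : g = 1 := by
      have := key n
      rw [hn] at this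
      simpa using this
    rw [hg] at this
    exact mul_inv_eq_one.mp this
  · -- surjectivity
    intro v
    -- build approximations: for all k, some u with (u⁻¹ φ u) v⁻¹ ∈ LCS k
    have key : ∀ k : ℕ, ∃ u : U, (u⁻¹ * φ u) * v⁻¹ ∈ (⊤ : Subgroup U).lowerCentralSeries k := by
      intro k
      induction k with
      | zero => exact ⟨1, Subgroup.mem_top _⟩
      | succ k ih =>
        obtain ⟨u, hu⟩ := ih
        set w := (u⁻¹ * φ u) * v⁻¹ with hw
        have hwinv : w⁻¹ ∈ (⊤ : Subgroup U).lowerCentralSeries k := inv_mem hu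
        obtain ⟨u', hu', hu'2⟩ := hsurj k w⁻¹ hwinv
        -- hu'2 : (u'⁻¹ * φ u') * (w⁻¹)⁻¹ ∈ LCS (k+1), i.e. u'⁻¹ φ u' w ∈ LCS (k+1)
        rw [inv_inv] at hu'2
        refine ⟨u * u', ?_⟩
        have hφu' : φ u' ∈ (⊤ : Subgroup U).lowerCentralSeries k := phi_mem_lcs φ hu'
        -- X = (u u')⁻¹ φ(u u') v⁻¹ = u'⁻¹ w v (φ u') v⁻¹
        have c1 : w⁻¹ * (φ u')⁻¹ * w * (φ u') ∈ (⊤ : Subgroup U).lowerCentralSeries (k + 1) := by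
          have := comm_mem_lcs_succ (inv_mem hu) (φ u')⁻¹
          simpa [mul_assoc] using this
        have c2 : (φ u')⁻¹ * v * (φ u') * v⁻¹ ∈ (⊤ : Subgroup U).lowerCentralSeries (k + 1) := by
          have := comm_mem_lcs_succ (inv_mem hφu') v
          simpa [mul_assoc] using this
        have hdecomp : ((u * u')⁻¹ * φ (u * u')) * v⁻¹ =
            ((u'⁻¹ * φ u') * w) * (w⁻¹ * (φ u')⁻¹ * w * (φ u')) *
              ((φ u')⁻¹ * v * (φ u') * v⁻¹) := by
          simp only [map_mul, hw]
          group
        rw [hdecomp]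
        exact mul_mem (mul_mem hu'2 c1) c2
    obtain ⟨u, hu⟩ := key n
    rw [hn] at hu
    refine ⟨u, ?_⟩
    have : (u⁻¹ * φ u) * v⁻¹ = 1 := by simpa using hu
    simp only
    calc u⁻¹ * φ u = ((u⁻¹ * φ u) * v⁻¹) * v := by group
      _ = v := by rw [this]; group
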